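/- The weakened inductiveness-plus-covering condition — for every phase q and valuation v, if σ ∈ φ q v and (σ,σ') ∈ TR then there exists p with (σ,σ') ∈ δ q p v and σ' ∈ φ p v — together with initiation, suffices to show that the automaton is a phase invariant of TS (every finite TS-trace under every valuation is matched by a phase trace whose states satisfy the characterizations). Moreover, for deterministic automata in which every δ-edge relation is contained in TR, the weak condition together with the strong edge-covering condition implies the strong inductiveness condition. -/
import Mathlib


/-- The weakened inductiveness-plus-covering condition together with initiation
    suffices for a phase invariant; moreover, for deterministic automata whose
    edges are contained in TR, the weak condition with strong edge covering
    implies strong inductiveness. -/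
theorem weak_condition_suffices_and_implies_strong_for_deterministic
    {S V Q : Type*}
    (Init : Set S) (TR : Set (S × S)) (ι : Q)
    (δ : Q → Q → V → Set (S × S)) (φ : Q → V → Set S)
    (hinit : ∀ v, Init ⊆ φ ι v)
    (hweak : ∀ q v σ σ', σ ∈ φ q v → (σ, σ') ∈ TR →
      ∃ p, (σ, σ') ∈ δ q p v ∧ σ' ∈ φ p v) :
    (∀ (n : ℕ) (σ : ℕ → S), σ 0 ∈ Init → (∀ i < n, (σ i, σ (i + 1)) ∈ TR) →
      ∀ v : V, ∃ qs : ℕ → Q, qs 0 = ι ∧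
        (∀ i < n, (σ i, σ (i + 1)) ∈ δ (qs i) (qs (i + 1)) v) ∧
        (∀ i ≤ n, σ i ∈ φ (qs i) v)) ∧
    ((∀ q v p₁ p₂, p₁ ≠ p₂ → δ q p₁ v ∩ δ q p₂ v = ∅) →
     (∀ q p v, δ q p v ⊆ TR) →
     (∀ q v σ σ', σ ∈ φ q v → (σ, σ') ∈ TR → ∃ p, (σ, σ') ∈ δ q p v) →
     (∀ q p v σ σ', σ ∈ φ q v → (σ, σ') ∈ δ q p v → σ' ∈ φ p v)) := by
  constructor
  · intro n σ h0 htr v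
    classical
    let qs : ℕ → Q := fun i => Nat.rec ι
      (fun i q => if h : σ i ∈ φ q v ∧ (σ i, σ (i + 1)) ∈ TR then
        Classical.choose (hweak q v (σ i) (σ (i + 1)) h.1 h.2) else ι) i
    have hφ : ∀ i ≤ n, σ i ∈ φ (qs i) v := by
      intro i
      induction i with
      | zero => intro _; exact hinit v h0
      | succ i ih =>
        intro hle
        have hi : i ≤ n := Nat.le_of_succ_le hle
        have h : σ i ∈ φ (qs i) v ∧ (σ i, σ (i + 1)) ∈ TR :=
          ⟨ih hi, htr i hle⟩
        show σ (i + 1) ∈ φ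
          (if h' : σ i ∈ φ (qs i) v ∧ (σ i, σ (i + 1)) ∈ TR then
            Classical.choose (hweak (qs i) v (σ i) (σ (i + 1)) h'.1 h'.2) else ι) v
        rw [dif_pos h]
        exact (Classical.choose_spec (hweak (qs i) v (σ i) (σ (i + 1)) h.1 h.2)).2
    refine ⟨qs, rfl, ?_, hφ⟩
    intro i hlt
    have h : σ i ∈ φ (qs i) v ∧ (σ i, σ (i + 1)) ∈ TR :=
      ⟨hφ i (Nat.le_of_lt hlt), htr i hlt⟩
    have : qs (i + 1) =
        Classical.choose (hweak (qs i) v (σ i) (σ (i + 1)) h.1 h.2) := by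
      show (if h' : σ i ∈ φ (qs i) v ∧ (σ i, σ (i + 1)) ∈ TR then
            Classical.choose (hweak (qs i) v (σ i) (σ (i + 1)) h'.1 h'.2) else ι) = _
      rw [dif_pos h]
    rw [this]
    exact (Classical.choose_spec (hweak (qs i) v (σ i) (σ (i + 1)) h.1 h.2)).1
  · intro hdet hsub _hcov q p v σ σ' hφ hδ
    have htr : (σ, σ') ∈ TR := hsub q p v hδ
    obtain ⟨p', hδ', hφ'⟩ := hweak q v σ σ' hφ htr
    by_cases hpp : p = p'
    · exact hpp ▸ hφ'
    · exact absurd (Set.mem_inter hδ hδ')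
        (by rw [hdet q v p p' hpp]; exact Set.notMem_empty _)
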